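/- arXiv:2412.13675 — 11 statements merged into one kernel-verified Lean document; each statement's English description precedes it below -/
import Mathlib

section
/- For n ≥ 1, ∑_{p=1}^{n} C(n-1, p-1)·2^{n-p} = 3^{n-1}. -/
theorem schroeder_idempotent_count (n : ℕ) (hn : 1 ≤ n) :
    ∑ p ∈ Finset.Icc 1 n, Nat.choose (n - 1) (p - 1) * 2 ^ (n - p) = 3 ^ (n - 1) := by
  obtain ⟨m, rfl⟩ : ∃ m, n = m + 1 := ⟨n - 1, (Nat.succ_pred_eq_of_pos hn).symm⟩
  rw [← Finset.Ico_add_one_right_eq_Icc, Finset.sum_Ico_eq_sum_range]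
  have h : (3 : ℕ) ^ m = (1 + 2) ^ m := by norm_num
  rw [Nat.add_sub_cancel m 1, h, add_pow]
  simp [Nat.add_sub_cancel, mul_comm]
  apply Finset.sum_congr rfl
  intro x _
  congr 2
  omega
end

section
/- An element α of the large Schröder monoid LS_n is regular if and only if α is an idempotent (α² = α). -/
/-- Partial transformations of the chain `Fin n`. -/
abbrev PT (n : ℕ) := Fin n → Option (Fin n)

/-- Composition of partial transformations: apply `α` first, then `β`. -/
def comp {n : ℕ} (α β : PT n) : PT n := fun x => (α x).bind β

/-- `α` is isotone (order-preserving on its domain). -/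
def IsIsotone {n : ℕ} (α : PT n) : Prop :=
  ∀ x y a b : Fin n, α x = some a → α y = some b → x ≤ y → a ≤ b

/-- `α` is order-decreasing on its domain. -/
def IsDecreasing {n : ℕ} (α : PT n) : Prop :=
  ∀ x a : Fin n, α x = some a → a ≤ x

/-- The large Schröder monoid: isotone, order-decreasing partial transformations. -/
def LS (n : ℕ) : Set (PT n) := {α | IsIsotone α ∧ IsDecreasing α}

/-- The image of a partial transformation. -/
def Im {n : ℕ} (α : PT n) : Set (Fin n) := {y | ∃ x, α x = some y}

/-- The height of a partial transformation is the size of its image. -/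
noncomputable def height {n : ℕ} (α : PT n) : ℕ := (Im α).ncard

/-- The kernel of `α`, as a set of pairs of elements of the domain. -/
def kerS {n : ℕ} (α : PT n) : Set (Fin n × Fin n) :=
  {p | ∃ a : Fin n, α p.1 = some a ∧ α p.2 = some a}

/-- The set of fixed points of `α`. -/
def FixPts {n : ℕ} (α : PT n) : Set (Fin n) := {x | α x = some x}

theorem LS_regular_iff_idempotent (n : ℕ) (α : PT n) (hα : α ∈ LS n) :
    (∃ β ∈ LS n, comp (comp α β) α = α) ↔ comp α α = α := by
  constructor
  · rintro ⟨β, ⟨-, hβd⟩, hreg⟩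
    funext x
    have hx := congrFun hreg x
    simp only [comp] at hx ⊢
    cases h : α x with
    | none => rfl
    | some a =>
      rw [h] at hx
      simp only [Option.bind_some] at hx
      cases hb : β a with
      | none => rw [hb] at hx; simp at hx
      | some c =>
        rw [hb] at hx
        simp only [Option.bind_some] at hx
        have hca : c ≤ a := hβd a c hb
        have hac : a ≤ c := hα.2 c a hx
        have : c = a := le_antisymm hca hac
        subst this
        simpa using hx
  · intro h
    exact ⟨α, hα, by rw [h, h]⟩
end

section
/- The large Schröder monoid LS_n is R-trivial: if α, β ∈ LS_n satisfy α = βγ and β = αδ for some γ, δ in LS_n ∪ {identity}, then α = β. -/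
theorem LS_R_trivial (n : ℕ) (α β γ δ : PT n)
    (hα : α ∈ LS n) (hβ : β ∈ LS n) (hγ : γ ∈ LS n) (hδ : δ ∈ LS n)
    (h1 : α = comp β γ) (h2 : β = comp α δ) : α = β := by
  funext x
  cases hx : α x with
  | none =>
    have : β x = (α x).bind δ := congrFun h2 x
    rw [hx] at this
    simpa using this.symm
  | some a =>
    have h1x : (β x).bind γ = some a := by
      have := congrFun h1 x; rw [hx] at this; exact this.symm
    obtain ⟨b, hb, hgb⟩ := Option.bind_eq_some_iff.mp h1x
    have h2x : β x = (α x).bind δ := congrFun h2 x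
    rw [hx] at h2x
    have hdb : δ a = some b := by rw [hb] at h2x; simpa using h2x.symm
    have hab : a ≤ b := hγ.2 b a hgb
    have hba : b ≤ a := hδ.2 a b hdb
    rw [hb, le_antisymm hba hab]
end

section
/- For every α in the large Schröder monoid LS_n, there exists a partial transformation α' of [n] such that αα'α = α, and both α'α and αα' lie in LS_n; in particular α'α is the identity on Im α and αα' is an idempotent of LS_n. Hence LS_n is an inverse ideal of the partial transformation monoid P_n. -/
theorem LS_inverse_ideal (n : ℕ) (α : PT n) (hα : α ∈ LS n) :
    ∃ α' : PT n,
      comp (comp α α') α = α ∧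
      comp α' α ∈ LS n ∧
      comp α α' ∈ LS n ∧
      (∀ x : Fin n, (x ∈ Im α → comp α' α x = some x) ∧ (x ∉ Im α → comp α' α x = none)) ∧
      comp (comp α α') (comp α α') = comp α α' := by
  obtain ⟨hiso, hdec⟩ := hα
  classical
  set S : Fin n → Finset (Fin n) := fun y => Finset.univ.filter (fun x => α x = some y) with hS
  refine ⟨fun y => if h : (S y).Nonempty then some ((S y).min' h) else none, ?_, ?_, ?_, ?_, ?_⟩
  all_goals
    have hmem : ∀ y x, x ∈ S y ↔ α x = some y := by
      intro y x; simp [hS]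
  · -- αα'α = α
    funext x
    cases hx : α x with
    | none => simp [comp, hx]
    | some y =>
      have hne : (S y).Nonempty := ⟨x, (hmem y x).2 hx⟩
      have hm : α ((S y).min' hne) = some y := (hmem y _).1 ((S y).min'_mem hne)
      simp [comp, hx, hne, hm]
  · -- α'α ∈ LS
    have key : ∀ x a : Fin n, comp (fun y => if h : (S y).Nonempty then some ((S y).min' h) else none) α x = some a → a = x := by
      intro x a h
      by_cases hne : (S x).Nonempty
      · have hm : α ((S x).min' hne) = some x := (hmem x _).1 ((S x).min'_mem hne)
        simp [comp, hne, hm] at h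
        exact h.symm
      · simp [comp, hne] at h
    constructor
    · intro x y a b ha hb hxy
      rw [key x a ha, key y b hb]; exact hxy
    · intro x a ha; rw [key x a ha]
  · -- αα' ∈ LS
    have key : ∀ x m : Fin n, comp α (fun y => if h : (S y).Nonempty then some ((S y).min' h) else none) x = some m → ∃ y, ∃ hne : (S y).Nonempty, α x = some y ∧ m = (S y).min' hne := by
      intro x m h
      cases hx : α x with
      | none => simp [comp, hx] at h
      | some y =>
        have hne : (S y).Nonempty := ⟨x, (hmem y x).2 hx⟩
        simp [comp, hx, hne] at h
        exact ⟨y, hne, rfl, h.symm⟩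
    constructor
    · intro x x' a b ha hb hxy
      obtain ⟨y, hne, hxy1, rfl⟩ := key x a ha
      obtain ⟨y', hne', hxy2, rfl⟩ := key x' b hb
      by_contra hlt
      push_neg at hlt
      have h1 : α ((S y').min' hne') = some y' := (hmem y' _).1 ((S y').min'_mem hne')
      have h2 : α ((S y).min' hne) = some y := (hmem y _).1 ((S y).min'_mem hne)
      have hyy : y ≤ y' := hiso x x' y y' hxy1 hxy2 hxy
      have : y' ≤ y := hiso _ _ _ _ h1 h2 (le_of_lt hlt)
      have : y = y' := le_antisymm hyy this
      subst this
      exact absurd rfl (ne_of_gt hlt)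
    · intro x a ha
      obtain ⟨y, hne, hxy1, rfl⟩ := key x a ha
      exact (S y).min'_le x ((hmem y x).2 hxy1)
  · -- partial identity on Im α
    intro x
    constructor
    · rintro ⟨z, hz⟩
      have hne : (S x).Nonempty := ⟨z, (hmem x z).2 hz⟩
      have hm : α ((S x).min' hne) = some x := (hmem x _).1 ((S x).min'_mem hne)
      simp [comp, hne, hm]
    · intro hx
      have hne : ¬ (S x).Nonempty := by
        rintro ⟨z, hz⟩
        exact hx ⟨z, (hmem x z).1 hz⟩
      simp [comp, hne]
  · -- idempotent
    funext x
    cases hx : α x with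
    | none => simp [comp, hx]
    | some y =>
      have hne : (S y).Nonempty := ⟨x, (hmem y x).2 hx⟩
      have hm : α ((S y).min' hne) = some y := (hmem y _).1 ((S y).min'_mem hne)
      simp [comp, hx, hne, hm]
end

section
/- Let α, β be elements of LS_n each of height exactly p (i.e., |Im α| = |Im β| = p). If the product αβ is an idempotent of height p, then both α and β are idempotents and αβ = α. -/
theorem LS_idempotent_product (n p : ℕ) (α β : PT n)
    (hα : α ∈ LS n) (hβ : β ∈ LS n)
    (hhα : height α = p) (hhβ : height β = p)
    (hidem : comp (comp α β) (comp α β) = comp α β)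
    (hh : height (comp α β) = p) :
    comp α α = α ∧ comp β β = β ∧ comp α β = α := by
  obtain ⟨hαi, hαd⟩ := hα
  obtain ⟨hβi, hβd⟩ := hβ
  -- fixed points of the product are fixed by both
  have hsubα : FixPts (comp α β) ⊆ FixPts α := by
    intro x hx
    simp only [FixPts, Set.mem_setOf_eq, comp] at hx ⊢
    cases hA : α x with
    | none => rw [hA] at hx; simp at hx
    | some a =>
      rw [hA] at hx
      simp only [Option.bind_some] at hx
      have : a = x := le_antisymm (hαd x a hA) (hβd a x hx)
      rw [this]
  have hsubβ : FixPts (comp α β) ⊆ FixPts β := by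
    intro x hx
    simp only [FixPts, Set.mem_setOf_eq, comp] at hx ⊢
    cases hA : α x with
    | none => rw [hA] at hx; simp at hx
    | some a =>
      rw [hA] at hx
      simp only [Option.bind_some] at hx
      have : a = x := le_antisymm (hαd x a hA) (hβd a x hx)
      rw [this] at hx; exact hx
  -- image of the idempotent product equals its fixed points
  have hImFix : Im (comp α β) = FixPts (comp α β) := by
    apply Set.Subset.antisymm
    · rintro y ⟨x, hx⟩
      have h := congrFun hidem x
      rw [show comp (comp α β) (comp α β) x = ((comp α β) x).bind (comp α β) from rfl,
        hx] at h
      simp only [Option.bind_some] at h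
      exact h
    · intro x hx
      exact ⟨x, hx⟩
  have hfixA : FixPts α ⊆ Im α := fun x hx => ⟨x, hx⟩
  have hfixB : FixPts β ⊆ Im β := fun x hx => ⟨x, hx⟩
  have hncard : (FixPts (comp α β)).ncard = p := by
    rw [← hImFix]; exact hh
  have eqA : FixPts (comp α β) = Im α := by
    apply Set.eq_of_subset_of_ncard_le (hsubα.trans hfixA)
    · rw [hncard]; exact hhα.le
  have eqB : FixPts (comp α β) = Im β := by
    apply Set.eq_of_subset_of_ncard_le (hsubβ.trans hfixB)
    · rw [hncard]; exact hhβ.le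
  have hImAfixA : Im α ⊆ FixPts α := eqA ▸ hsubα
  have hImAfixB : Im α ⊆ FixPts β := eqA ▸ hsubβ
  have hImBfixB : Im β ⊆ FixPts β := eqB ▸ hsubβ
  refine ⟨?_, ?_, ?_⟩
  · funext x
    cases hA : α x with
    | none => simp [comp, hA]
    | some a =>
      have : α a = some a := hImAfixA ⟨x, hA⟩
      simp [comp, hA, this]
  · funext x
    cases hB : β x with
    | none => simp [comp, hB]
    | some b =>
      have : β b = some b := hImBfixB ⟨x, hB⟩
      simp [comp, hB, this]
  · funext x
    cases hA : α x with
    | none => simp [comp, hA]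
    | some a =>
      have : β a = some a := hImAfixB ⟨x, hA⟩
      simp [comp, hA, this]
end

section
/- For two elements α, β of the large Schröder monoid LS_n with |Im α| = |Im β| = p, α L β (i.e., there exist γ₁, γ₂ in LS_n ∪ {id} with α = γ₁β and β = γ₂α) if and only if Im α = Im β and the minima of corresponding kernel classes agree: min(A_i) = min(B_i) for all 1 ≤ i ≤ p, where A_1 < ... < A_p and B_1 < ... < B_p are the kernel classes of α and β respectively. -/
lemma exists_least {n : ℕ} {s : Set (Fin n)} (hs : s.Nonempty) : ∃ m, IsLeast s m := by
  classical
  have hf : s.Finite := Set.toFinite s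
  have ht : hf.toFinset.Nonempty := by
    obtain ⟨x, hx⟩ := hs
    exact ⟨x, hf.mem_toFinset.mpr hx⟩
  refine ⟨hf.toFinset.min' ht, hf.mem_toFinset.mp (hf.toFinset.min'_mem ht), ?_⟩
  intro x hx
  exact hf.toFinset.min'_le x (hf.mem_toFinset.mpr hx)

lemma transfer {n : ℕ} {α β γ₁ γ₂ : PT n} (hd1 : IsDecreasing γ₁) (hd2 : IsDecreasing γ₂)
    (h1 : α = comp γ₁ β) (h2 : β = comp γ₂ α) {a m : Fin n}
    (hm : IsLeast {x | α x = some a} m) : IsLeast {x | β x = some a} m := by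
  have hαm : α m = some a := hm.1
  have hbind : (γ₁ m).bind β = some a := by rw [h1] at hαm; exact hαm
  obtain ⟨y, hy1, hy2⟩ := Option.bind_eq_some_iff.mp hbind
  have hym : y ≤ m := hd1 m y hy1
  -- m is a lower bound of the β-class
  have hlb : ∀ x, β x = some a → m ≤ x := by
    intro x hx
    have hbind2 : (γ₂ x).bind α = some a := by rw [h2] at hx; exact hx
    obtain ⟨z, hz1, hz2⟩ := Option.bind_eq_some_iff.mp hbind2
    exact le_trans (hm.2 hz2) (hd2 x z hz1)
  have hmy : m ≤ y := hlb y hy2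
  have : y = m := le_antisymm hym hmy
  exact ⟨this ▸ hy2, fun x hx => hlb x hx⟩

lemma construct {n : ℕ} (α β : PT n) (hα : α ∈ LS n) (hβ : β ∈ LS n)
    (him : Im α = Im β)
    (hmin : ∀ a ∈ Im α, ∀ m : Fin n,
      IsLeast {x | α x = some a} m → IsLeast {x | β x = some a} m) :
    ∃ γ ∈ LS n, β = comp γ α := by
  classical
  set γ : PT n := fun x => (β x).bind (fun a =>
    if h : ∃ m, IsLeast {y | α y = some a} m then some h.choose else none) with hγ
  -- basic characterization
  have key : ∀ x a : Fin n, β x = some a → ∃ m, γ x = some m ∧ IsLeast {y | α y = some a} m := by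
    intro x a hx
    have haIm : a ∈ Im α := him ▸ ⟨x, hx⟩
    obtain ⟨x0, hx0⟩ := haIm
    have hne : ∃ m, IsLeast {y | α y = some a} m := exists_least ⟨x0, hx0⟩
    refine ⟨hne.choose, ?_, hne.choose_spec⟩
    simp [hγ, hx, hne]
  have keyrev : ∀ x m : Fin n, γ x = some m →
      ∃ a, β x = some a ∧ IsLeast {y | α y = some a} m := by
    intro x m hxm
    cases hbx : β x with
    | none => simp [hγ, hbx] at hxm
    | some a =>
      obtain ⟨m', hm'1, hm'2⟩ := key x a hbx
      have hmm : m' = m := Option.some_inj.mp (hm'1.symm.trans hxm)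
      subst hmm
      exact ⟨a, rfl, hm'2⟩
  refine ⟨γ, ⟨?_, ?_⟩, ?_⟩
  · -- isotone
    intro x y mx my hx hy hxy
    obtain ⟨a, hax, hma⟩ := keyrev x mx hx
    obtain ⟨b, hby, hmb⟩ := keyrev y my hy
    have hab : a ≤ b := hβ.1 x y a b hax hby hxy
    by_contra hlt
    push_neg at hlt
    have hba : b ≤ a := hα.1 my mx b a hmb.1 hma.1 hlt.le
    have : a = b := le_antisymm hab hba
    subst this
    exact absurd (le_antisymm (hma.2 hmb.1) (hmb.2 hma.1) ▸ le_refl mx) (by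
      rw [le_antisymm (hma.2 hmb.1) (hmb.2 hma.1)] at hlt; exact absurd le_rfl hlt.not_ge)
  · -- decreasing
    intro x m hxm
    obtain ⟨a, hax, hma⟩ := keyrev x m hxm
    have haIm : a ∈ Im α := ⟨m, hma.1⟩
    have hβleast := hmin a haIm m hma
    exact hβleast.2 hax
  · -- β = comp γ α
    funext x
    show β x = (γ x).bind α
    cases hbx : β x with
    | none => simp [hγ, hbx]
    | some a =>
      obtain ⟨m, hm1, hm2⟩ := key x a hbx
      rw [hm1, Option.bind_some, hm2.1]

theorem LS_L_relation (n p : ℕ) (α β : PT n)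
    (hα : α ∈ LS n) (hβ : β ∈ LS n)
    (hhα : height α = p) (hhβ : height β = p) :
    (∃ γ₁ ∈ LS n, ∃ γ₂ ∈ LS n, α = comp γ₁ β ∧ β = comp γ₂ α) ↔
      (Im α = Im β ∧
        ∀ a ∈ Im α, ∀ m : Fin n,
          (IsLeast {x | α x = some a} m ↔ IsLeast {x | β x = some a} m)) := by
  constructor
  · rintro ⟨γ₁, hγ₁, γ₂, hγ₂, h1, h2⟩
    constructor
    · ext a
      constructor
      · rintro ⟨x, hx⟩
        have hbind : (γ₁ x).bind β = some a := by rw [h1] at hx; exact hx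
        obtain ⟨y, _, hy2⟩ := Option.bind_eq_some_iff.mp hbind
        exact ⟨y, hy2⟩
      · rintro ⟨x, hx⟩
        have hbind : (γ₂ x).bind α = some a := by rw [h2] at hx; exact hx
        obtain ⟨y, _, hy2⟩ := Option.bind_eq_some_iff.mp hbind
        exact ⟨y, hy2⟩
    · intro a _ m
      exact ⟨transfer hγ₁.2 hγ₂.2 h1 h2, transfer hγ₂.2 hγ₁.2 h2 h1⟩
  · rintro ⟨him, hmin⟩
    obtain ⟨γ₂, hγ₂, hc2⟩ := construct α β hα hβ him (fun a ha m hm => (hmin a ha m).mp hm)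
    obtain ⟨γ₁, hγ₁, hc1⟩ := construct β α hβ hα him.symm
      (fun a ha m hm => (hmin a (him.symm ▸ ha) m).mpr hm)
    exact ⟨γ₁, hγ₁, γ₂, hγ₂, hc1, hc2⟩
end

section
/- In the large Schröder monoid LS_n, two elements α and β are L*-related if and only if Im α = Im β. -/
/-- The `L*` relation on `LS n` (with quantifiers over `LS n`, which contains the identity). -/
def LStar (n : ℕ) (α β : PT n) : Prop :=
  ∀ γ ∈ LS n, ∀ δ ∈ LS n, (comp α γ = comp α δ ↔ comp β γ = comp β δ)

lemma comp_eq_iff {n : ℕ} (α γ δ : PT n) :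
    comp α γ = comp α δ ↔ ∀ y ∈ Im α, γ y = δ y := by
  constructor
  · rintro h y ⟨x, hx⟩
    have := congrFun h x
    simpa [comp, hx] using this
  · intro h
    funext x
    cases hx : α x with
    | none => simp [comp, hx]
    | some a => simpa [comp, hx] using h a ⟨x, hx⟩

lemma lstar_im_subset {n : ℕ} (α β : PT n) (h : LStar n α β) : Im β ⊆ Im α := by
  classical
  set γ : PT n := fun x => some x with hγ
  set δ : PT n := fun x => if x ∈ Im α then some x else none with hδ
  have hγLS : γ ∈ LS n := by
    constructor
    · intro x y a b hx hy hxy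
      simp only [hγ, Option.some.injEq] at hx hy
      subst hx; subst hy; exact hxy
    · intro x a hx
      simp only [hγ, Option.some.injEq] at hx
      subst hx; exact le_refl x
  have hδLS : δ ∈ LS n := by
    constructor
    · intro x y a b hx hy hxy
      simp only [hδ] at hx hy
      split at hx <;> split at hy <;> simp_all
    · intro x a hx
      simp only [hδ] at hx
      split at hx <;> simp_all
  have hcomp : comp α γ = comp α δ := by
    rw [comp_eq_iff]
    intro y hy
    simp [hγ, hδ, hy]
  have hβeq : comp β γ = comp β δ := (h γ hγLS δ hδLS).mp hcomp
  rintro y ⟨x, hx⟩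
  have := congrFun hβeq x
  simp only [comp, hx, hγ, hδ, Option.bind_some] at this
  by_contra hy
  simp [hy] at this

theorem LS_Lstar_iff_im_eq (n : ℕ) (α β : PT n) (hα : α ∈ LS n) (hβ : β ∈ LS n) :
    LStar n α β ↔ Im α = Im β := by
  constructor
  · intro h
    apply Set.Subset.antisymm
    · exact lstar_im_subset β α (fun γ hγ δ hδ => (h γ hγ δ hδ).symm)
    · exact lstar_im_subset α β h
  · intro h γ _ δ _
    rw [comp_eq_iff, comp_eq_iff, h]
end

section
/- In the large Schröder monoid LS_n, two elements α and β are R*-related if and only if ker α = ker β (the partitions of their domains into fibers coincide, including equality of domains). -/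
/-- The `R*` relation on `LS n` (with quantifiers over `LS n`, which contains the identity). -/
def RStar (n : ℕ) (α β : PT n) : Prop :=
  ∀ γ ∈ LS n, ∀ δ ∈ LS n, (comp γ α = comp δ α ↔ comp γ β = comp δ β)


/-- restriction of identity to the domain of α -/
def restrId {n : ℕ} (α : PT n) : PT n := fun z => if (α z).isSome then some z else none

lemma restrId_mem {n : ℕ} (α : PT n) : restrId α ∈ LS n := by
  constructor
  · intro x y a b hx hy hxy
    unfold restrId at hx hy
    split_ifs at hx hy <;> simp_all
  · intro x a hx
    unfold restrId at hx
    split_ifs at hx <;> simp_all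

lemma id_mem {n : ℕ} : (fun z => some z : PT n) ∈ LS n := by
  constructor
  · intro x y a b hx hy hxy; simp_all
  · intro x a hx; simp_all

lemma comp_restrId {n : ℕ} (α β : PT n) (z : Fin n) :
    comp (restrId α) β z = if (α z).isSome then β z else none := by
  unfold comp restrId
  split_ifs <;> simp

lemma comp_id {n : ℕ} (β : PT n) : comp (fun z => some z) β = β := by
  funext z; simp [comp]

/-- collapse [x,y]∩Dom α to x, identity on rest of Dom α -/
def collapse {n : ℕ} (α : PT n) (x y : Fin n) : PT n :=
  fun z => if (α z).isSome then (if x ≤ z ∧ z ≤ y then some x else some z) else none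

lemma collapse_mem {n : ℕ} (α : PT n) (x y : Fin n) : collapse α x y ∈ LS n := by
  constructor
  · intro z w u v hz hw hzw
    unfold collapse at hz hw
    split_ifs at hz hw <;> simp_all <;> omega
  · intro z u hz
    unfold collapse at hz
    split_ifs at hz <;> simp_all <;> omega

lemma comp_collapse {n : ℕ} {α : PT n} (hα : α ∈ LS n) {x y a : Fin n}
    (hx : α x = some a) (hy : α y = some a) (hxy : x ≤ y) :
    comp (collapse α x y) α = α := by
  funext z
  unfold comp collapse
  split_ifs with h1 h2
  · -- x ≤ z ≤ y, α z isSome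
    obtain ⟨c, hc⟩ := Option.isSome_iff_exists.mp h1
    have h1' : a ≤ c := hα.1 x z a c hx hc h2.1
    have h2' : c ≤ a := hα.1 z y c a hc hy h2.2
    have : c = a := le_antisymm h2' h1'
    simp [hc, this, hx]
  · simp
  · obtain h := Option.not_isSome_iff_eq_none.mp h1
    simp [h]

/-- the easy direction, pointwise -/
lemma comp_eq_of_ker {n : ℕ} {α β : PT n} (h : kerS α = kerS β) {γ δ : PT n}
    (hc : comp γ α = comp δ α) : comp γ β = comp δ β := by
  have hdom : ∀ u : Fin n, α u = none → β u = none := by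
    intro u hu
    by_contra hb
    obtain ⟨b, hb⟩ := Option.ne_none_iff_exists'.mp hb
    have : (u, u) ∈ kerS β := ⟨b, hb, hb⟩
    rw [← h] at this
    obtain ⟨c, hc', _⟩ := this
    rw [hu] at hc'; cases hc'
  funext z
  have hz := congrFun hc z
  simp only [comp] at hz ⊢
  cases hg : γ z with
  | none =>
    cases hd : δ z with
    | none => rfl
    | some v =>
      rw [hg, hd] at hz
      simp only [Option.bind_none, Option.bind_some] at hz
      simp only [Option.bind_none, Option.bind_some]
      exact (hdom v hz.symm).symm
  | some u =>
    cases hd : δ z with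
    | none =>
      rw [hg, hd] at hz
      simp only [Option.bind_none, Option.bind_some] at hz
      simp only [Option.bind_none, Option.bind_some]
      exact hdom u hz
    | some v =>
      rw [hg, hd] at hz
      simp only [Option.bind_some] at hz
      simp only [Option.bind_some]
      cases ha : α u with
      | none => rw [hdom u ha, hdom v (by rw [← hz, ha])]
      | some a =>
        have : (u, v) ∈ kerS α := ⟨a, ha, by rw [← hz, ha]⟩
        rw [h] at this
        obtain ⟨b, hb1, hb2⟩ := this
        rw [hb1, hb2]

lemma beta_isSome {n : ℕ} {α β : PT n} (hR : RStar n α β) {x a : Fin n}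
    (hx : α x = some a) : (β x).isSome := by
  by_contra hb
  have heq : comp (restrId β) β = comp (fun z => some z) β := by
    funext z
    rw [comp_restrId, comp_id]
    split_ifs with h
    · rfl
    · exact (Option.not_isSome_iff_eq_none.mp h).symm
  have := (hR (restrId β) (restrId_mem β) (fun z => some z) id_mem).mpr heq
  have hz := congrFun this x
  rw [comp_restrId, comp_id] at hz
  rw [if_neg hb] at hz
  rw [hx] at hz
  cases hz

lemma key {n : ℕ} {α β : PT n} (hα : α ∈ LS n) (hR : RStar n α β) {x y a : Fin n}
    (hx : α x = some a) (hy : α y = some a) (hxy : x ≤ y) : β x = β y := by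
  have heq : comp (collapse α x y) α = comp (restrId α) α := by
    rw [comp_collapse hα hx hy hxy]
    funext z
    rw [comp_restrId]
    split_ifs with h
    · rfl
    · exact Option.not_isSome_iff_eq_none.mp h
  have := (hR (collapse α x y) (collapse_mem α x y) (restrId α) (restrId_mem α)).mp heq
  have hz := congrFun this y
  simp only [comp, collapse, restrId] at hz
  rw [hy] at hz
  simp only [Option.isSome_some, if_true, hxy, le_refl, and_self, if_pos,
    Option.bind_some] at hz
  exact hz

lemma ker_subset_of_rstar {n : ℕ} {α β : PT n} (hα : α ∈ LS n) (hR : RStar n α β) :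
    kerS α ⊆ kerS β := by
  rintro ⟨x, y⟩ ⟨a, hx, hy⟩
  obtain ⟨b, hb⟩ := Option.isSome_iff_exists.mp (beta_isSome hR hx)
  have hxy : β x = β y := by
    rcases le_total x y with h | h
    · exact key hα hR hx hy h
    · exact (key hα hR hy hx h).symm
  exact ⟨b, hb, by rw [← hxy, hb]⟩

theorem LS_Rstar_iff_ker_eq (n : ℕ) (α β : PT n) (hα : α ∈ LS n) (hβ : β ∈ LS n) :
    RStar n α β ↔ kerS α = kerS β := by
  constructor
  · intro hR
    have hR' : RStar n β α := fun γ hγ δ hδ => (hR γ hγ δ hδ).symm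
    exact Set.Subset.antisymm (ker_subset_of_rstar hα hR) (ker_subset_of_rstar hβ hR')
  · intro h γ _ δ _
    exact ⟨comp_eq_of_ker h, comp_eq_of_ker h.symm⟩
end

section
/- In the large Schröder monoid LS_n, every R*-class contains exactly one idempotent; concretely, for each linearly ordered partition P = {A_1 < ... < A_p} of a subset of [n], the unique idempotent with kernel classes P is the map sending each A_i to min A_i. -/
noncomputable def eps {n : ℕ} (α : PT n) : PT n := fun x =>
  if _ : ∃ a, α x = some a then
    some ((Finset.univ.filter (fun y => α y = α x)).min'
      ⟨x, Finset.mem_filter.2 ⟨Finset.mem_univ x, rfl⟩⟩)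
  else none

lemma eps_none {n : ℕ} {α : PT n} {x : Fin n} (h : α x = none) : eps α x = none := by
  unfold eps; rw [dif_neg]; simp [h]

lemma eps_spec {n : ℕ} {α : PT n} {x a : Fin n} (h : α x = some a) :
    ∃ m, eps α x = some m ∧ α m = α x ∧ ∀ y, α y = α x → m ≤ y := by
  have hx : ∃ a, α x = some a := ⟨a, h⟩
  unfold eps
  rw [dif_pos hx]
  set s := Finset.univ.filter (fun y => α y = α x) with hs
  have hne : s.Nonempty := ⟨x, Finset.mem_filter.2 ⟨Finset.mem_univ x, rfl⟩⟩
  refine ⟨s.min' hne, rfl, ?_, ?_⟩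
  · have := s.min'_mem hne
    exact (Finset.mem_filter.1 this).2
  · intro y hy
    exact s.min'_le y (Finset.mem_filter.2 ⟨Finset.mem_univ y, hy⟩)

lemma eps_congr {n : ℕ} {α : PT n} {x y : Fin n} (h : α x = α y) : eps α x = eps α y := by
  unfold eps
  simp only [h]

theorem LS_Rstar_class_unique_idempotent (n : ℕ) (α : PT n) (hα : α ∈ LS n) :
    (∃! ε : PT n, ε ∈ LS n ∧ comp ε ε = ε ∧ kerS ε = kerS α) ∧
      (∀ ε : PT n, ε ∈ LS n → comp ε ε = ε → kerS ε = kerS α →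
        ∀ x m : Fin n, IsLeast {y | (x, y) ∈ kerS α} m → ε x = some m) := by
  obtain ⟨hiso, hdec⟩ := hα
  -- key: any idempotent ε in LS maps x to the least element of its kernel class
  have key : ∀ ε : PT n, ε ∈ LS n → comp ε ε = ε →
      ∀ x m : Fin n, ε x = some m → IsLeast {y | (x, y) ∈ kerS ε} m := by
    intro ε ⟨hεi, hεd⟩ hid x m h
    have hm : ε m = some m := by
      have := congrFun hid x
      simp only [comp, h, Option.bind] at this
      exact this
    constructor
    · exact ⟨m, h, hm⟩
    · rintro y ⟨b, hb1, hb2⟩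
      rw [h] at hb1
      cases hb1
      exact hεd y m hb2
  have part2 : ∀ ε : PT n, ε ∈ LS n → comp ε ε = ε → kerS ε = kerS α →
      ∀ x m : Fin n, IsLeast {y | (x, y) ∈ kerS α} m → ε x = some m := by
    intro ε hε hid hker x m hm
    rw [← hker] at hm
    obtain ⟨⟨a, ha1, ha2⟩, hlb⟩ := hm
    have hleast := key ε hε hid x a ha1
    have : a = m := by
      have h1 : a ≤ m := hleast.2 ⟨a, ha1, ha2⟩
      have h2 : m ≤ a := hlb hleast.1
      exact le_antisymm h1 h2
    rw [ha1, this]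
  refine ⟨?_, part2⟩
  -- existence of eps α
  have hεLS : eps α ∈ LS n := by
    constructor
    · intro x y mx my hx hy hxy
      obtain ⟨a, ha⟩ : ∃ a, α x = some a := by
        by_contra h
        push_neg at h
        have : α x = none := by cases hax : α x with
          | none => rfl
          | some v => exact absurd hax (h v)
        rw [eps_none this] at hx; exact nomatch hx
      obtain ⟨b, hb⟩ : ∃ b, α y = some b := by
        by_contra h
        push_neg at h
        have : α y = none := by cases hay : α y with
          | none => rfl
          | some v => exact absurd hay (h v)
        rw [eps_none this] at hy; exact nomatch hy
      obtain ⟨mx', hmx1, hmx2, hmx3⟩ := eps_spec ha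
      obtain ⟨my', hmy1, hmy2, hmy3⟩ := eps_spec hb
      rw [hx] at hmx1; rw [hy] at hmy1
      cases hmx1; cases hmy1
      by_contra hlt
      push_neg at hlt
      -- my < mx
      have hmxx : mx ≤ x := hmx3 x rfl
      have hab : a ≤ b := hiso x y a b ha hb hxy
      have hαmx : α mx = some a := by rw [hmx2, ha]
      have hαmy : α my = some b := by rw [hmy2, hb]
      have hba : b ≤ a := hiso my mx b a hαmy hαmx (le_of_lt hlt)
      have : a = b := le_antisymm hab hba
      have hxy' : α x = α y := by rw [ha, hb, this]
      have : eps α x = eps α y := eps_congr hxy'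
      rw [hx, hy] at this
      cases this
      exact absurd rfl (ne_of_lt hlt)
    · intro x m h
      obtain ⟨a, ha⟩ : ∃ a, α x = some a := by
        by_contra hc
        push_neg at hc
        have : α x = none := by cases hax : α x with
          | none => rfl
          | some v => exact absurd hax (hc v)
        rw [eps_none this] at h; exact nomatch h
      obtain ⟨m', h1, _, h3⟩ := eps_spec ha
      rw [h] at h1; cases h1
      exact h3 x rfl
  have hεid : comp (eps α) (eps α) = eps α := by
    funext x
    cases hax : α x with
    | none => simp [comp, eps_none hax]
    | some a =>
      obtain ⟨m, h1, h2, _⟩ := eps_spec hax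
      have : eps α m = eps α x := eps_congr h2
      simp [comp, h1, this, h1]
  have hεker : kerS (eps α) = kerS α := by
    ext ⟨x, y⟩
    constructor
    · rintro ⟨c, hc1, hc2⟩
      obtain ⟨a, ha⟩ : ∃ a, α x = some a := by
        by_contra hc
        push_neg at hc
        have : α x = none := by cases hax : α x with
          | none => rfl
          | some v => exact absurd hax (hc v)
        rw [eps_none this] at hc1; exact nomatch hc1
      obtain ⟨b, hb⟩ : ∃ b, α y = some b := by
        by_contra hc
        push_neg at hc
        have : α y = none := by cases hay : α y with
          | none => rfl
          | some v => exact absurd hay (hc v)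
        rw [eps_none this] at hc2; exact nomatch hc2
      obtain ⟨mx, h1, h2, _⟩ := eps_spec ha
      obtain ⟨my, h3, h4, _⟩ := eps_spec hb
      rw [hc1] at h1; rw [hc2] at h3
      cases h1; cases h3
      refine ⟨a, ha, ?_⟩
      have : α c = some a := by rw [h2, ha]
      have h5 : α c = some b := by rw [h4, hb]
      rw [this] at h5
      cases h5
      exact hb
    · rintro ⟨a, ha1, ha2⟩
      obtain ⟨m, h1, _, _⟩ := eps_spec ha1
      have heq : α x = α y := by rw [ha1, ha2]
      have : eps α y = some m := by rw [← eps_congr heq, h1]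
      exact ⟨m, h1, this⟩
  refine ⟨eps α, ⟨hεLS, hεid, hεker⟩, ?_⟩
  intro ε ⟨hε1, hε2, hε3⟩
  funext x
  cases hεx : ε x with
  | none =>
    cases hx : eps α x with
    | none => rfl
    | some m =>
      have hmem : (x, x) ∈ kerS (eps α) := ⟨m, hx, hx⟩
      rw [hεker, ← hε3] at hmem
      obtain ⟨d, hd, _⟩ := hmem
      rw [hεx] at hd; exact nomatch hd
  | some m =>
    have hleast := key ε hε1 hε2 x m hεx
    rw [hε3] at hleast
    exact (part2 (eps α) hεLS hεid hεker x m hleast).symm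
end

section
/- The number of idempotents of height exactly p in the large Schröder monoid LS_n equals ∑_{r=p}^{n} C(n,r)·C(r-1,p-1); equivalently, this counts pairs (D, P) where D ⊆ [n] with |D| = r ≥ p and P is a partition of D into p convex (linearly ordered, modulo D) blocks. -/
namespace LSAux

open scoped Classical

variable {n : ℕ}

/-- The canonical idempotent associated to a domain `D` and fixed-point set `F`. -/
def phi (D F : Finset (Fin n)) : PT n :=
  fun x => if x ∈ D then (F.filter (· ≤ x)).max else none

/-- The admissibility predicate on pairs `(D, F)`. -/
def Adm (p : ℕ) (D F : Finset (Fin n)) : Prop :=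
  F ⊆ D ∧ F.card = p ∧ ∀ x ∈ D, ∃ f ∈ F, f ≤ x

lemma max_eq_some_iff {s : Finset (Fin n)} {a : Fin n} :
    s.max = some a ↔ a ∈ s ∧ ∀ b ∈ s, b ≤ a := by
  constructor
  · intro h
    refine ⟨Finset.mem_of_max h, fun b hb => ?_⟩
    exact Finset.le_max_of_eq hb h
  · rintro ⟨ha, hb⟩
    refine le_antisymm (Finset.max_le ?_) (Finset.le_max ha)
    intro b hbs
    exact WithBot.coe_le_coe.mpr (hb b hbs)

lemma phi_eq_some_iff {p : ℕ} {D F : Finset (Fin n)} (h : Adm p D F) {x a : Fin n} :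
    phi D F x = some a ↔ x ∈ D ∧ a ∈ F ∧ a ≤ x ∧ ∀ f ∈ F, f ≤ x → f ≤ a := by
  unfold phi
  by_cases hx : x ∈ D
  · simp only [hx, if_true, true_and]
    refine (max_eq_some_iff (s := F.filter (· ≤ x)) (a := a)).trans ?_
    simp only [Finset.mem_filter]
    constructor
    · rintro ⟨⟨haF, hax⟩, hb⟩
      exact ⟨haF, hax, fun f hf hfx => hb f ⟨hf, hfx⟩⟩
    · rintro ⟨haF, hax, hb⟩
      exact ⟨⟨haF, hax⟩, fun f hf => hb f hf.1 hf.2⟩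
  · simp [hx]

lemma phi_some_exists {p : ℕ} {D F : Finset (Fin n)} (h : Adm p D F) {x : Fin n}
    (hx : x ∈ D) : ∃ a, phi D F x = some a := by
  obtain ⟨f, hf, hfx⟩ := h.2.2 x hx
  have hne : (F.filter (· ≤ x)).Nonempty := ⟨f, Finset.mem_filter.2 ⟨hf, hfx⟩⟩
  obtain ⟨a, ha⟩ := Finset.max_of_nonempty hne
  exact ⟨a, by simp only [phi, hx, if_true]; exact ha⟩

lemma phi_none_iff {D F : Finset (Fin n)} {x : Fin n} (hx : x ∉ D) : phi D F x = none := by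
  simp [phi, hx]

lemma phi_mem {p : ℕ} {D F : Finset (Fin n)} (h : Adm p D F) :
    phi D F ∈ {ε : PT n | ε ∈ LS n ∧ comp ε ε = ε ∧ height ε = p} := by
  have key := fun {x a : Fin n} => (phi_eq_some_iff h (x := x) (a := a))
  have hfix : ∀ f ∈ F, phi D F f = some f := by
    intro f hf
    exact key.2 ⟨h.1 hf, hf, le_refl f, fun g _ hg => hg⟩
  refine ⟨⟨?_, ?_⟩, ?_, ?_⟩
  · intro x y a b hx hy hxy
    obtain ⟨hxD, haF, hax, hamax⟩ := key.1 hx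
    obtain ⟨hyD, hbF, hby, hbmax⟩ := key.1 hy
    exact hbmax a haF (le_trans hax hxy)
  · intro x a hx
    exact (key.1 hx).2.2.1
  · funext x
    by_cases hx : x ∈ D
    · obtain ⟨a, ha⟩ := phi_some_exists h hx
      have haF : a ∈ F := (key.1 ha).2.1
      simp [comp, ha, hfix a haF]
    · simp [comp, phi_none_iff hx]
  · have him : Im (phi D F) = (F : Set (Fin n)) := by
      ext y
      constructor
      · rintro ⟨x, hx⟩
        exact (key.1 hx).2.1
      · intro hy
        exact ⟨y, hfix y hy⟩
    rw [height, him, Set.ncard_coe_finset, h.2.1]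

/-- The domain of `ε` as a finset. -/
noncomputable def domF (ε : PT n) : Finset (Fin n) :=
  Finset.univ.filter (fun x => (ε x).isSome)

/-- The fixed points of `ε` as a finset. -/
noncomputable def fixF (ε : PT n) : Finset (Fin n) :=
  Finset.univ.filter (fun x => ε x = some x)

lemma eps_eq_phi {p : ℕ} {ε : PT n}
    (hε : ε ∈ {ε : PT n | ε ∈ LS n ∧ comp ε ε = ε ∧ height ε = p}) :
    Adm p (domF ε) (fixF ε) ∧ ε = phi (domF ε) (fixF ε) := by
  obtain ⟨⟨hiso, hdec⟩, hid, hht⟩ := hε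
  have hid' : ∀ x, (ε x).bind ε = ε x := fun x => congrFun hid x
  -- image values are fixed points
  have hfix_of : ∀ x a, ε x = some a → ε a = some a := by
    intro x a hx
    have := hid' x
    rw [hx] at this
    simpa using this
  have hadm : Adm p (domF ε) (fixF ε) := by
    refine ⟨?_, ?_, ?_⟩
    · intro f hf
      rw [fixF, Finset.mem_filter] at hf
      rw [domF, Finset.mem_filter]
      exact ⟨Finset.mem_univ _, by rw [hf.2]; rfl⟩
    · have him : Im ε = (fixF ε : Set (Fin n)) := by
        ext y
        simp only [Im, Set.mem_setOf_eq, fixF, Finset.coe_filter, Finset.mem_univ, true_and,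
          Set.mem_setOf_eq]
        exact ⟨fun ⟨x, hx⟩ => hfix_of x y hx, fun hy => ⟨y, hy⟩⟩
      rw [← hht, height, him, Set.ncard_coe_finset]
    · intro x hx
      rw [domF, Finset.mem_filter] at hx
      obtain ⟨a, ha⟩ := Option.isSome_iff_exists.1 hx.2
      refine ⟨a, ?_, hdec x a ha⟩
      rw [fixF, Finset.mem_filter]
      exact ⟨Finset.mem_univ _, hfix_of x a ha⟩
  refine ⟨hadm, ?_⟩
  funext x
  by_cases hx : (ε x).isSome
  · obtain ⟨a, ha⟩ := Option.isSome_iff_exists.1 hx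
    rw [ha]
    symm
    rw [phi_eq_some_iff hadm]
    refine ⟨by rw [domF, Finset.mem_filter]; exact ⟨Finset.mem_univ _, hx⟩, ?_, hdec x a ha, ?_⟩
    · rw [fixF, Finset.mem_filter]
      exact ⟨Finset.mem_univ _, hfix_of x a ha⟩
    · intro f hf hfx
      rw [fixF, Finset.mem_filter] at hf
      exact hiso f x f a hf.2 ha hfx
  · have hx' : x ∉ domF ε := by
      rw [domF, Finset.mem_filter]
      simp [hx]
    rw [phi_none_iff hx']
    simpa using Option.not_isSome_iff_eq_none.1 (by simpa using hx)

lemma domF_phi {p : ℕ} {D F : Finset (Fin n)} (h : Adm p D F) : domF (phi D F) = D := by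
  ext x
  rw [domF, Finset.mem_filter]
  constructor
  · rintro ⟨-, hx⟩
    obtain ⟨a, ha⟩ := Option.isSome_iff_exists.1 hx
    exact ((phi_eq_some_iff h).1 ha).1
  · intro hx
    obtain ⟨a, ha⟩ := phi_some_exists h hx
    exact ⟨Finset.mem_univ _, by rw [ha]; rfl⟩

lemma fixF_phi {p : ℕ} {D F : Finset (Fin n)} (h : Adm p D F) : fixF (phi D F) = F := by
  ext x
  rw [fixF, Finset.mem_filter]
  constructor
  · rintro ⟨-, hx⟩
    exact ((phi_eq_some_iff h).1 hx).2.1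
  · intro hx
    refine ⟨Finset.mem_univ _, ?_⟩
    exact (phi_eq_some_iff h).2 ⟨h.1 hx, hx, le_refl x, fun g _ hg => hg⟩

/-- The finset of admissible pairs. -/
noncomputable def pairs (n p : ℕ) : Finset (Finset (Fin n) × Finset (Fin n)) :=
  Finset.univ.filter (fun DF => Adm p DF.1 DF.2)

lemma set_eq_image (n p : ℕ) :
    {ε : PT n | ε ∈ LS n ∧ comp ε ε = ε ∧ height ε = p} =
      (fun DF : Finset (Fin n) × Finset (Fin n) => phi DF.1 DF.2) '' (pairs n p) := by
  ext ε
  constructor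
  · intro hε
    obtain ⟨hadm, heq⟩ := eps_eq_phi hε
    exact ⟨(domF ε, fixF ε), by simp [pairs, hadm], heq.symm⟩
  · rintro ⟨⟨D, F⟩, hDF, rfl⟩
    have hadm : Adm p D F := by simpa [pairs] using hDF
    exact phi_mem hadm

lemma inj_on (n p : ℕ) :
    Set.InjOn (fun DF : Finset (Fin n) × Finset (Fin n) => phi DF.1 DF.2) (pairs n p) := by
  rintro ⟨D₁, F₁⟩ h₁ ⟨D₂, F₂⟩ h₂ heq
  have hadm₁ : Adm p D₁ F₁ := by simpa [pairs] using h₁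
  have hadm₂ : Adm p D₂ F₂ := by simpa [pairs] using h₂
  simp only at heq
  have hD : D₁ = D₂ := by rw [← domF_phi hadm₁, ← domF_phi hadm₂, heq]
  have hF : F₁ = F₂ := by rw [← fixF_phi hadm₁, ← fixF_phi hadm₂, heq]
  simp [hD, hF]

/-- count F's for a fixed D -/
lemma count_F {p : ℕ} (hp : 1 ≤ p) (D : Finset (Fin n)) :
    (Finset.univ.filter (fun F => Adm p D F)).card =
      if p ≤ D.card then (D.card - 1).choose (p - 1) else 0 := by
  by_cases hpD : p ≤ D.card
  · rw [if_pos hpD]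
    have hDne : D.Nonempty := Finset.card_pos.1 (lt_of_lt_of_le hp hpD)
    set m := D.min' hDne with hm
    have hmD : m ∈ D := D.min'_mem hDne
    -- Adm p D F ↔ F ⊆ D ∧ F.card = p ∧ m ∈ F
    have hiff : ∀ F : Finset (Fin n), Adm p D F ↔ (F ⊆ D ∧ F.card = p ∧ m ∈ F) := by
      intro F
      constructor
      · rintro ⟨hFD, hFc, hall⟩
        obtain ⟨f, hf, hfm⟩ := hall m hmD
        have : m ≤ f := D.min'_le f (hFD hf)
        have : f = m := le_antisymm hfm this
        exact ⟨hFD, hFc, this ▸ hf⟩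
      · rintro ⟨hFD, hFc, hmF⟩
        exact ⟨hFD, hFc, fun x hx => ⟨m, hmF, D.min'_le x hx⟩⟩
    have : (Finset.univ.filter (fun F => Adm p D F)) =
        ((D.erase m).powersetCard (p - 1)).image (insert m) := by
      ext F
      simp only [Finset.mem_filter, Finset.mem_univ, true_and, Finset.mem_image,
        Finset.mem_powersetCard, hiff]
      constructor
      · rintro ⟨hFD, hFc, hmF⟩
        refine ⟨F.erase m, ⟨?_, ?_⟩, ?_⟩
        · exact Finset.erase_subset_erase m hFD
        · rw [Finset.card_erase_of_mem hmF, hFc]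
        · exact Finset.insert_erase hmF
      · rintro ⟨G, ⟨hGD, hGc⟩, rfl⟩
        have hmG : m ∉ G := fun h => (Finset.mem_erase.1 (hGD h)).1 rfl
        refine ⟨?_, ?_, Finset.mem_insert_self m G⟩
        · intro x hx
          rcases Finset.mem_insert.1 hx with rfl | hx
          · exact hmD
          · exact (Finset.mem_erase.1 (hGD hx)).2
        · rw [Finset.card_insert_of_notMem hmG, hGc]
          omega
    rw [this, Finset.card_image_of_injOn, Finset.card_powersetCard,
      Finset.card_erase_of_mem hmD]
    intro G₁ h₁ G₂ h₂ heq
    simp only [Finset.mem_coe, Finset.mem_powersetCard] at h₁ h₂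
    have hm₁ : m ∉ G₁ := fun h => (Finset.mem_erase.1 (h₁.1 h)).1 rfl
    have hm₂ : m ∉ G₂ := fun h => (Finset.mem_erase.1 (h₂.1 h)).1 rfl
    calc G₁ = (insert m G₁).erase m := by rw [Finset.erase_insert hm₁]
    _ = (insert m G₂).erase m := by rw [heq]
    _ = G₂ := Finset.erase_insert hm₂
  · rw [if_neg hpD]
    rw [Finset.card_eq_zero, Finset.filter_eq_empty_iff]
    rintro F - ⟨hFD, hFc, -⟩
    exact hpD (hFc ▸ Finset.card_le_card hFD)

lemma pairs_card (n p : ℕ) (hp : 1 ≤ p) :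
    (pairs n p).card = ∑ r ∈ Finset.Icc p n, Nat.choose n r * Nat.choose (r - 1) (p - 1) := by
  classical
  have h1 : (pairs n p).card =
      ∑ D ∈ (Finset.univ : Finset (Finset (Fin n))),
        (Finset.univ.filter (fun F => Adm p D F)).card := by
    rw [pairs]
    rw [Finset.card_eq_sum_card_fiberwise
      (f := Prod.fst) (t := (Finset.univ : Finset (Finset (Fin n))))
      (fun x _ => Finset.mem_univ _)]
    refine Finset.sum_congr rfl fun D _ => ?_
    have hfib : ((Finset.univ.filter
          (fun DF : Finset (Fin n) × Finset (Fin n) => Adm p DF.1 DF.2)).filter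
            (fun DF => DF.1 = D))
        = {D} ×ˢ (Finset.univ.filter (fun F => Adm p D F)) := by
      ext ⟨D', F⟩
      simp only [Finset.mem_filter, Finset.mem_univ, true_and, Finset.mem_product,
        Finset.mem_singleton]
      constructor
      · rintro ⟨h1, rfl⟩
        exact ⟨rfl, h1⟩
      · rintro ⟨rfl, h1⟩
        exact ⟨h1, rfl⟩
    rw [hfib, Finset.card_product, Finset.card_singleton, one_mul]
  rw [h1]
  have h2 : ∀ D : Finset (Fin n), (Finset.univ.filter (fun F => Adm p D F)).card =
      (fun r => if p ≤ r then (r - 1).choose (p - 1) else 0) D.card :=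
    fun D => count_F hp D
  calc ∑ D ∈ (Finset.univ : Finset (Finset (Fin n))),
        (Finset.univ.filter (fun F => Adm p D F)).card
      = ∑ D ∈ (Finset.univ : Finset (Fin n)).powerset,
          (fun r => if p ≤ r then (r - 1).choose (p - 1) else 0) D.card := by
        rw [Finset.powerset_univ]
        exact Finset.sum_congr rfl fun D _ => h2 D
    _ = ∑ m ∈ Finset.range ((Finset.univ : Finset (Fin n)).card + 1),
          ((Finset.univ : Finset (Fin n)).card).choose m •
            (if p ≤ m then (m - 1).choose (p - 1) else 0) :=
        Finset.sum_powerset_apply_card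
          (f := fun r => if p ≤ r then (r - 1).choose (p - 1) else 0)
          (x := (Finset.univ : Finset (Fin n)))
    _ = ∑ m ∈ Finset.range (n + 1),
          n.choose m * (if p ≤ m then (m - 1).choose (p - 1) else 0) := by
        simp [Finset.card_univ, smul_eq_mul]
    _ = ∑ r ∈ Finset.Icc p n, Nat.choose n r * Nat.choose (r - 1) (p - 1) := by
        rw [← Finset.sum_subset (s₁ := Finset.Icc p n) (s₂ := Finset.range (n + 1))
          (fun m hm => by rw [Finset.mem_Icc] at hm; exact Finset.mem_range.2 (by omega))
          (fun m hmr hmI => by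
            rw [Finset.mem_range] at hmr
            rw [Finset.mem_Icc] at hmI
            rw [if_neg (by omega), mul_zero])]
        exact Finset.sum_congr rfl fun m hm => by
          rw [Finset.mem_Icc] at hm
          rw [if_pos hm.1]

end LSAux

theorem LS_idempotent_count (n p : ℕ) (hp : 1 ≤ p) (hpn : p ≤ n) :
    {ε : PT n | ε ∈ LS n ∧ comp ε ε = ε ∧ height ε = p}.ncard =
      ∑ r ∈ Finset.Icc p n, Nat.choose n r * Nat.choose (r - 1) (p - 1) := by
  classical
  rw [LSAux.set_eq_image n p, Set.ncard_image_of_injOn (LSAux.inj_on n p),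
    Set.ncard_coe_finset, LSAux.pairs_card n p hp]
end

section
/- The large Schröder monoid LS_n is abundant: every L*-class and every R*-class of LS_n contains an idempotent. Concretely, for each α ∈ LS_n, the identity map on Im α is an idempotent L*-related to α, and the map sending each kernel class of α to its minimum is an idempotent R*-related to α. -/
open Classical in
/-- Identity on the image of `α`. -/
noncomputable def epsL {n : ℕ} (α : PT n) : PT n :=
  fun y => if ∃ x, α x = some y then some y else none

/-- The minimum of the fiber of `x` under `α` (fiber of the value `α x`). -/
noncomputable def mfib {n : ℕ} (α : PT n) (x : Fin n) : Fin n :=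
  (Finset.univ.filter (fun z => α z = α x)).min' ⟨x, by simp⟩

lemma mfib_spec {n : ℕ} (α : PT n) (x : Fin n) : α (mfib α x) = α x := by
  have := Finset.min'_mem (Finset.univ.filter (fun z => α z = α x)) ⟨x, by simp⟩
  simpa [mfib] using this

lemma mfib_le {n : ℕ} (α : PT n) (x : Fin n) : mfib α x ≤ x :=
  Finset.min'_le _ _ (by simp)

lemma mfib_congr {n : ℕ} (α : PT n) {x y : Fin n} (h : α x = α y) :
    mfib α x = mfib α y := by
  simp only [mfib, h]

/-- Sends each element of the domain to the minimum of its fiber. -/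
noncomputable def epsR {n : ℕ} (α : PT n) : PT n :=
  fun x => (α x).map (fun _ => mfib α x)

lemma epsR_eq_none_iff {n : ℕ} (α : PT n) (x : Fin n) :
    epsR α x = none ↔ α x = none := by
  cases h : α x <;> simp [epsR, h]

lemma epsR_eq_iff {n : ℕ} (α : PT n) (u v : Fin n) :
    epsR α u = epsR α v ↔ α u = α v := by
  constructor
  · intro h
    cases hu : α u with
    | none =>
      have : epsR α v = none := by rw [← h, epsR_eq_none_iff]; exact hu
      exact ((epsR_eq_none_iff α v).1 this).symm
    | some a =>
      cases hv : α v with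
      | none =>
        exfalso
        have : epsR α u = none := by rw [h, epsR_eq_none_iff]; exact hv
        simp [epsR, hu] at this
      | some b =>
        have hm : mfib α u = mfib α v := by
          have h1 : epsR α u = some (mfib α u) := by simp [epsR, hu]
          have h2 : epsR α v = some (mfib α v) := by simp [epsR, hv]
          rw [h1, h2] at h; exact Option.some_injective _ h
        rw [← hu, ← hv]
        exact (mfib_spec α u).symm.trans ((congrArg α hm).trans (mfib_spec α v))
  · intro h
    unfold epsR
    rw [h, mfib_congr α h]

theorem LS_abundant (n : ℕ) (α : PT n) (hα : α ∈ LS n) :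
    (∃ ε ∈ LS n, comp ε ε = ε ∧ LStar n α ε) ∧
      (∃ ε ∈ LS n, comp ε ε = ε ∧ RStar n α ε) := by
  obtain ⟨hiso, hdec⟩ := hα
  constructor
  · -- L* part: identity on the image
    refine ⟨epsL α, ⟨?_, ?_⟩, ?_, ?_⟩
    · intro x y a b hx hy hxy
      have hax : x = a := by
        by_cases h : ∃ z, α z = some x
        · simpa [epsL, h] using hx
        · simp [epsL, h] at hx
      have hby : y = b := by
        by_cases h : ∃ z, α z = some y
        · simpa [epsL, h] using hy
        · simp [epsL, h] at hy
      rw [← hax, ← hby]; exact hxy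
    · intro x a hx
      by_cases h : ∃ z, α z = some x
      · have : x = a := by simpa [epsL, h] using hx
        exact this.ge
      · simp [epsL, h] at hx
    · funext y
      by_cases h : ∃ z, α z = some y
      · simp [comp, epsL, h]
      · simp [comp, epsL, h]
    · intro γ hγ δ hδ
      constructor
      · intro h
        funext y
        by_cases hy : ∃ z, α z = some y
        · obtain ⟨z, hz⟩ := hy
          have hy' : ∃ z, α z = some y := ⟨z, hz⟩
          have := congrFun h z
          simp only [comp, hz, Option.bind_some] at this
          simp only [comp, epsL, if_pos hy', Option.bind_some]
          exact this
        · simp [comp, epsL, hy]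
      · intro h
        funext x
        cases hx : α x with
        | none => simp [comp, hx]
        | some y =>
          have hy : ∃ z, α z = some y := ⟨x, hx⟩
          have := congrFun h y
          simp only [comp, epsL, if_pos hy, Option.bind_some] at this
          simp only [comp, hx, Option.bind_some]
          exact this
  · -- R* part: minimum of each fiber
    refine ⟨epsR α, ⟨?_, ?_⟩, ?_, ?_⟩
    · intro x y a b hx hy hxy
      cases hax : α x with
      | none => simp [epsR, hax] at hx
      | some p =>
        cases hay : α y with
        | none => simp [epsR, hay] at hy
        | some q =>
          have ha : a = mfib α x := by
            have : epsR α x = some (mfib α x) := by simp [epsR, hax]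
            rw [this] at hx; exact (Option.some_injective _ hx).symm
          have hb : b = mfib α y := by
            have : epsR α y = some (mfib α y) := by simp [epsR, hay]
            rw [this] at hy; exact (Option.some_injective _ hy).symm
          subst ha hb
          by_contra hlt
          push_neg at hlt
          have hmy : α (mfib α y) = some q := (mfib_spec α y).trans hay
          have hmx : α (mfib α x) = some p := (mfib_spec α x).trans hax
          have hqp : q ≤ p := hiso _ _ _ _ hmy hmx hlt.le
          have hpq : p ≤ q := hiso _ _ _ _ hax hay hxy
          have : p = q := le_antisymm hpq hqp
          subst this
          have : mfib α x = mfib α y := mfib_congr α (by rw [hax, hay])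
          rw [this] at hlt
          exact lt_irrefl _ hlt
    · intro x a hx
      cases hax : α x with
      | none => simp [epsR, hax] at hx
      | some p =>
        have : epsR α x = some (mfib α x) := by simp [epsR, hax]
        rw [this] at hx
        have := (Option.some_injective _ hx).symm
        subst this
        exact mfib_le α x
    · funext x
      cases hax : α x with
      | none => simp [comp, epsR, hax]
      | some p =>
        have h1 : epsR α x = some (mfib α x) := by simp [epsR, hax]
        have h2 : α (mfib α x) = some p := (mfib_spec α x).trans hax
        have h3 : mfib α (mfib α x) = mfib α x := mfib_congr α (mfib_spec α x)
        have h4 : epsR α (mfib α x) = some (mfib α x) := by simp [epsR, h2, h3]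
        show (epsR α x).bind (epsR α) = epsR α x
        rw [h1, Option.bind_some, h4]
    · intro γ hγ δ hδ
      constructor
      · intro h
        funext x
        have hx := congrFun h x
        cases hgx : γ x with
        | none =>
          cases hdx : δ x with
          | none => simp [comp, hgx, hdx]
          | some v =>
            simp only [comp, hgx, hdx, Option.bind_none, Option.bind_some] at hx ⊢
            exact ((epsR_eq_none_iff α v).2 hx.symm).symm
        | some u =>
          cases hdx : δ x with
          | none =>
            simp only [comp, hgx, hdx, Option.bind_none, Option.bind_some] at hx ⊢
            exact (epsR_eq_none_iff α u).2 hx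
          | some v =>
            simp only [comp, hgx, hdx, Option.bind_some] at hx ⊢
            exact (epsR_eq_iff α u v).2 hx
      · intro h
        funext x
        have hx := congrFun h x
        cases hgx : γ x with
        | none =>
          cases hdx : δ x with
          | none => simp [comp, hgx, hdx]
          | some v =>
            simp only [comp, hgx, hdx, Option.bind_none, Option.bind_some] at hx ⊢
            exact ((epsR_eq_none_iff α v).1 hx.symm).symm
        | some u =>
          cases hdx : δ x with
          | none =>
            simp only [comp, hgx, hdx, Option.bind_none, Option.bind_some] at hx ⊢
            exact (epsR_eq_none_iff α u).1 hx
          | some v =>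
            simp only [comp, hgx, hdx, Option.bind_some] at hx ⊢
            exact (epsR_eq_iff α u v).1 hx
end
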